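/- arXiv:1708.07707 — 2 statements merged into one kernel-verified Lean document; each statement's English description precedes it below -/
import Mathlib

section
/- Define the tomogram of a Schwartz kernel ρ ∈ S(ℝ²) by ω(X, φ) = (1/2π) ∫_ℝ ∫_ℝ e^{i(s cos φ − X) t} ρ(s − (t sin φ)/2, s + (t sin φ)/2) ds dt. Then the characteristic function F(x,y) = ∫_ℝ e^{ixt} ρ(t − y/2, t + y/2) dt satisfies the inversion formula F(r cos φ, r sin φ) = ∫_ℝ e^{irX} ω(X, φ) dX for all r ∈ ℝ and φ ∈ [0, 2π). -/
open MeasureTheory Real Complex SchwartzMap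
open scoped FourierTransform RealInnerProductSpace

namespace Tomog

noncomputable section

/-- derivative of the affine path -/
lemma hasDerivAt_affine (w v : ℝ × ℝ) (x : ℝ) :
    HasDerivAt (fun x : ℝ => (w.1 + x * v.1, w.2 + x * v.2)) (v.1, v.2) x :=
  (HasDerivAt.prodMk ((hasDerivAt_mul_const v.1).const_add w.1)
    ((hasDerivAt_mul_const v.2).const_add w.2))

lemma tempGrowth_affine (w v : ℝ × ℝ) :
    Function.HasTemperateGrowth (fun x : ℝ => (w.1 + x * v.1, w.2 + x * v.2)) := by
  apply Function.HasTemperateGrowth.of_fderiv (k := 1) (C := ‖w‖ + ‖v‖)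
  · have : (fderiv ℝ (fun x : ℝ => (w.1 + x * v.1, w.2 + x * v.2)))
        = fun _ => ContinuousLinearMap.smulRight (1 : ℝ →L[ℝ] ℝ) ((v.1, v.2) : ℝ × ℝ) := by
      funext x
      exact (hasDerivAt_affine w v x).hasFDerivAt.fderiv
    rw [this]
    exact Function.HasTemperateGrowth.const _
  · exact fun x => ((hasDerivAt_affine w v x).differentiableAt)
  · intro x
    have h1 : ‖(w.1 + x * v.1, w.2 + x * v.2)‖ ≤ ‖w‖ + ‖v‖ * ‖x‖ := by
      rw [Prod.norm_def]
      rcases max_cases ‖w.1 + x * v.1‖ ‖w.2 + x * v.2‖ with ⟨h, _⟩ | ⟨h, _⟩ <;> rw [h]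
      · calc ‖w.1 + x * v.1‖ ≤ ‖w.1‖ + ‖x‖ * ‖v.1‖ := by
              simpa [norm_mul] using norm_add_le w.1 (x * v.1)
          _ ≤ ‖w‖ + ‖v‖ * ‖x‖ := by
              have := norm_fst_le w; have := norm_fst_le v
              have : ‖v.1‖ ≤ ‖v‖ := norm_fst_le v
              nlinarith [norm_fst_le w, norm_nonneg x, norm_nonneg v]
      · calc ‖w.2 + x * v.2‖ ≤ ‖w.2‖ + ‖x‖ * ‖v.2‖ := by
              simpa [norm_mul] using norm_add_le w.2 (x * v.2)
          _ ≤ ‖w‖ + ‖v‖ * ‖x‖ := by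
              nlinarith [norm_snd_le w, norm_snd_le v, norm_nonneg x, norm_nonneg v]
    calc ‖(w.1 + x * v.1, w.2 + x * v.2)‖ ≤ ‖w‖ + ‖v‖ * ‖x‖ := h1
      _ ≤ (‖w‖ + ‖v‖) * (1 + ‖x‖) ^ 1 := by nlinarith [norm_nonneg w, norm_nonneg v, norm_nonneg x]

/-- slice of a 2D Schwartz function along an affine line -/
def slice (w v : ℝ × ℝ) (h : ∃ (k : ℕ) (C : ℝ), ∀ x : ℝ,
    ‖x‖ ≤ C * (1 + ‖(w.1 + x * v.1, w.2 + x * v.2)‖) ^ k)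
    (f : 𝓢(ℝ × ℝ, ℂ)) : 𝓢(ℝ, ℂ) :=
  SchwartzMap.compCLM ℝ (tempGrowth_affine w v) h f

@[simp] lemma slice_apply (w v : ℝ × ℝ) (h) (f : 𝓢(ℝ × ℝ, ℂ)) (x : ℝ) :
    slice w v h f x = f (w.1 + x * v.1, w.2 + x * v.2) := rfl

lemma deriv_slice (w v : ℝ × ℝ) (h) (f : 𝓢(ℝ × ℝ, ℂ)) :
    deriv (⇑(slice w v h f)) = ⇑(slice w v h (LineDeriv.lineDerivOp ((v.1, v.2) : ℝ × ℝ) f)) := by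
  funext x
  have hd : HasDerivAt (fun x : ℝ => f (w.1 + x * v.1, w.2 + x * v.2))
      (fderiv ℝ f (w.1 + x * v.1, w.2 + x * v.2) (v.1, v.2)) x :=
    (f.differentiableAt.hasFDerivAt).comp_hasDerivAt x (hasDerivAt_affine w v x)
  simpa [SchwartzMap.lineDerivOp_apply_eq_fderiv,
    show ⇑(slice w v h f) = fun x : ℝ => f (w.1 + x * v.1, w.2 + x * v.2) from rfl] using hd.deriv

/-- uniform quadratic-decay bound for Schwartz functions on ℝ², in split form -/
lemma decay2 (f : 𝓢(ℝ × ℝ, ℂ)) : ∃ C : ℝ, 0 ≤ C ∧ ∀ (z : ℝ × ℝ) (d x : ℝ),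
    |d| ≤ 2 * ‖z‖ → |x| ≤ 2 * ‖z‖ → ((1 + d ^ 2) * (1 + x ^ 2)) * ‖f z‖ ≤ C := by
  refine ⟨16 * (2 ^ 4 * ((Finset.Iic ((4 : ℕ), (0 : ℕ))).sup (schwartzSeminormFamily ℝ _ _)) f),
    by positivity, fun z d x hd hx => ?_⟩
  have key : (1 + ‖z‖) ^ 4 * ‖f z‖ ≤
      2 ^ 4 * ((Finset.Iic ((4 : ℕ), (0 : ℕ))).sup (schwartzSeminormFamily ℝ _ _)) f := by
    have h := SchwartzMap.one_add_le_sup_seminorm_apply (𝕜 := ℝ) (m := ((4 : ℕ), (0 : ℕ)))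
        (k := 4) (n := 0) le_rfl le_rfl f z
    simp only [norm_iteratedFDeriv_zero] at h
    exact h
  have hz : (0 : ℝ) ≤ ‖z‖ := norm_nonneg z
  have hfz : (0 : ℝ) ≤ ‖f z‖ := norm_nonneg _
  have h1 : ((1 + d ^ 2) * (1 + x ^ 2)) ≤ 16 * (1 + ‖z‖) ^ 4 := by
    have hd2 : d ^ 2 ≤ 4 * ‖z‖ ^ 2 := by nlinarith [abs_nonneg d, _root_.sq_abs d]
    have hx2 : x ^ 2 ≤ 4 * ‖z‖ ^ 2 := by nlinarith [abs_nonneg x, _root_.sq_abs x]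
    nlinarith [sq_nonneg ‖z‖, sq_nonneg (1 + ‖z‖), sq_nonneg (‖z‖ * (1+‖z‖)), sq_nonneg (‖z‖*‖z‖)]
  calc ((1 + d ^ 2) * (1 + x ^ 2)) * ‖f z‖ ≤ (16 * (1 + ‖z‖) ^ 4) * ‖f z‖ := by
        apply mul_le_mul_of_nonneg_right h1 hfz
    _ = 16 * ((1 + ‖z‖) ^ 4 * ‖f z‖) := by ring
    _ ≤ 16 * (2 ^ 4 * ((Finset.Iic ((4 : ℕ), (0 : ℕ))).sup (schwartzSeminormFamily ℝ _ _)) f) := by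
        linarith [key]

/-- L¹ bound from pointwise quadratic decay -/
lemma int_norm_le {f : ℝ → ℂ} {C d : ℝ} (hC : 0 ≤ C) (hmeas : AEStronglyMeasurable f volume)
    (h : ∀ x : ℝ, ‖f x‖ ≤ C / (1 + d ^ 2) * (1 + x ^ 2)⁻¹) :
    ∫ x : ℝ, ‖f x‖ ≤ C / (1 + d ^ 2) * π := by
  have hd : (0 : ℝ) < 1 + d ^ 2 := by positivity
  have hint : Integrable (fun x : ℝ => C / (1 + d ^ 2) * (1 + x ^ 2)⁻¹) :=
    integrable_inv_one_add_sq.const_mul _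
  calc ∫ x : ℝ, ‖f x‖ ≤ ∫ x : ℝ, C / (1 + d ^ 2) * (1 + x ^ 2)⁻¹ := by
        apply integral_mono_of_nonneg (Filter.Eventually.of_forall fun x => norm_nonneg _)
          hint (Filter.Eventually.of_forall h)
    _ = C / (1 + d ^ 2) * π := by
        rw [integral_const_mul, integral_univ_inv_one_add_sq]

/-- Fourier decay bound for 1D Schwartz maps -/
lemma ft_bound (f : 𝓢(ℝ, ℂ)) (ξ : ℝ) :
    (1 + (2 * π * ξ) ^ 2) * ‖𝓕 (⇑f) ξ‖ ≤
      (∫ x : ℝ, ‖f x‖) + ∫ x : ℝ, ‖deriv (deriv ⇑f) x‖ := by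
  have hde : deriv ⇑f = ⇑(SchwartzMap.derivCLM ℝ ℂ f) :=
    funext fun x => (SchwartzMap.derivCLM_apply ℝ f x).symm
  have hde2 : deriv (deriv ⇑f) = ⇑(SchwartzMap.derivCLM ℝ ℂ (SchwartzMap.derivCLM ℝ ℂ f)) := by
    rw [hde]
    exact funext fun x => (SchwartzMap.derivCLM_apply ℝ (SchwartzMap.derivCLM ℝ ℂ f) x).symm
  have hf1 : Integrable (deriv ⇑f) := by
    rw [hde]; exact (SchwartzMap.derivCLM ℝ ℂ f).integrable
  have hf2 : Integrable (deriv (deriv ⇑f)) := by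
    rw [hde2]; exact (SchwartzMap.derivCLM ℝ ℂ (SchwartzMap.derivCLM ℝ ℂ f)).integrable
  have hdiff1 : Differentiable ℝ (deriv ⇑f) := by
    rw [hde]; exact (SchwartzMap.derivCLM ℝ ℂ f).differentiable
  have e1 : 𝓕 (deriv ⇑f) = fun x : ℝ => (2 * π * Complex.I * x) • 𝓕 ⇑f x :=
    Real.fourier_deriv f.integrable f.differentiable hf1
  have e2 : 𝓕 (deriv (deriv ⇑f)) = fun x : ℝ => (2 * π * Complex.I * x) • 𝓕 (deriv ⇑f) x :=
    Real.fourier_deriv hf1 hdiff1 hf2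
  have hnc : ‖(2 * (π : ℂ) * Complex.I * (ξ : ℂ))‖ = |2 * π * ξ| := by
    have : (2 * (π : ℂ) * Complex.I * (ξ : ℂ)) = ((2 * π * ξ : ℝ) : ℂ) * Complex.I := by
      push_cast; ring
    rw [this, norm_mul, Complex.norm_I, Complex.norm_real, mul_one, Real.norm_eq_abs]
  have hn2 : ‖𝓕 (deriv (deriv ⇑f)) ξ‖ = (2 * π * ξ) ^ 2 * ‖𝓕 ⇑f ξ‖ := by
    rw [e2]; simp only [e1]
    rw [norm_smul, norm_smul, hnc, ← mul_assoc, ← _root_.sq_abs (2 * π * ξ), ← sq]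
  have hb0 : ‖𝓕 (⇑f) ξ‖ ≤ ∫ x : ℝ, ‖f x‖ :=
    VectorFourier.norm_fourierIntegral_le_integral_norm _ _ _ _ _
  have hb2 : ‖𝓕 (deriv (deriv ⇑f)) ξ‖ ≤ ∫ x : ℝ, ‖deriv (deriv ⇑f) x‖ :=
    VectorFourier.norm_fourierIntegral_le_integral_norm _ _ _ _ _
  have h2 := hn2 ▸ hb2
  calc (1 + (2 * π * ξ) ^ 2) * ‖𝓕 (⇑f) ξ‖
      = ‖𝓕 (⇑f) ξ‖ + (2 * π * ξ) ^ 2 * ‖𝓕 ⇑f ξ‖ := by ring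
    _ ≤ (∫ x : ℝ, ‖f x‖) + ∫ x : ℝ, ‖deriv (deriv ⇑f) x‖ := add_le_add hb0 h2

lemma slice_pt_bound (f : 𝓢(ℝ × ℝ, ℂ)) {C : ℝ} (hC : 0 ≤ C)
    (hdec : ∀ (z : ℝ × ℝ) (d x : ℝ),
      |d| ≤ 2 * ‖z‖ → |x| ≤ 2 * ‖z‖ → ((1 + d ^ 2) * (1 + x ^ 2)) * ‖f z‖ ≤ C)
    (w v : ℝ × ℝ) (h) (d : ℝ)
    (hg : ∀ x : ℝ, |d| ≤ 2 * ‖(w.1 + x * v.1, w.2 + x * v.2)‖ ∧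
      |x| ≤ 2 * ‖(w.1 + x * v.1, w.2 + x * v.2)‖) (x : ℝ) :
    ‖slice w v h f x‖ ≤ C / (1 + d ^ 2) * (1 + x ^ 2)⁻¹ := by
  have hd : (0 : ℝ) < 1 + d ^ 2 := by positivity
  have hx : (0 : ℝ) < 1 + x ^ 2 := by positivity
  have key := hdec _ d x (hg x).1 (hg x).2
  rw [slice_apply]
  have heq : C / (1 + d ^ 2) * (1 + x ^ 2)⁻¹ = C / ((1 + d ^ 2) * (1 + x ^ 2)) := by
    field_simp
  rw [heq, le_div_iff₀ (by positivity)]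
  linarith [key]

lemma slice_ft_decay (f : 𝓢(ℝ × ℝ, ℂ)) (w : ℝ → ℝ × ℝ) (v : ℝ × ℝ)
    (hup : ∀ d : ℝ, ∃ (k : ℕ) (C : ℝ), ∀ x : ℝ,
      ‖x‖ ≤ C * (1 + ‖((w d).1 + x * v.1, (w d).2 + x * v.2)‖) ^ k)
    (hgeom : ∀ d x : ℝ, |d| ≤ 2 * ‖((w d).1 + x * v.1, (w d).2 + x * v.2)‖ ∧
      |x| ≤ 2 * ‖((w d).1 + x * v.1, (w d).2 + x * v.2)‖) :
    ∃ K : ℝ, 0 ≤ K ∧ ∀ (d ξ : ℝ),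
      ((1 + d ^ 2) * (1 + (2 * π * ξ) ^ 2)) * ‖𝓕 (⇑(slice (w d) v (hup d) f)) ξ‖ ≤ K := by
  obtain ⟨C1, hC1, h1⟩ := decay2 f
  obtain ⟨C2, hC2, h2⟩ := decay2 (LineDeriv.lineDerivOp ((v.1, v.2) : ℝ × ℝ)
    (LineDeriv.lineDerivOp ((v.1, v.2) : ℝ × ℝ) f))
  refine ⟨(C1 + C2) * π, by positivity, fun d ξ => ?_⟩
  have hd : (0 : ℝ) < 1 + d ^ 2 := by positivity
  have hI0 : ∫ x : ℝ, ‖slice (w d) v (hup d) f x‖ ≤ C1 / (1 + d ^ 2) * π :=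
    int_norm_le hC1 (slice (w d) v (hup d) f).continuous.aestronglyMeasurable
      (slice_pt_bound f hC1 h1 (w d) v (hup d) d (hgeom d))
  have hderiv2 : deriv (deriv ⇑(slice (w d) v (hup d) f)) =
      ⇑(slice (w d) v (hup d) (LineDeriv.lineDerivOp ((v.1, v.2) : ℝ × ℝ)
        (LineDeriv.lineDerivOp ((v.1, v.2) : ℝ × ℝ) f))) := by
    rw [deriv_slice, deriv_slice]
  have hI2 : ∫ x : ℝ, ‖deriv (deriv ⇑(slice (w d) v (hup d) f)) x‖ ≤ C2 / (1 + d ^ 2) * π := by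
    rw [hderiv2]
    exact int_norm_le hC2 (slice (w d) v (hup d) _).continuous.aestronglyMeasurable
      (slice_pt_bound _ hC2 h2 (w d) v (hup d) d (hgeom d))
  have hft := ft_bound (slice (w d) v (hup d) f) ξ
  have hnn : (0 : ℝ) ≤ ‖𝓕 (⇑(slice (w d) v (hup d) f)) ξ‖ := norm_nonneg _
  calc ((1 + d ^ 2) * (1 + (2 * π * ξ) ^ 2)) * ‖𝓕 (⇑(slice (w d) v (hup d) f)) ξ‖
      = (1 + d ^ 2) * ((1 + (2 * π * ξ) ^ 2) * ‖𝓕 (⇑(slice (w d) v (hup d) f)) ξ‖) := by ring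
    _ ≤ (1 + d ^ 2) * ((C1 / (1 + d ^ 2) * π) + (C2 / (1 + d ^ 2) * π)) := by
        apply mul_le_mul_of_nonneg_left _ (le_of_lt hd)
        exact hft.trans (add_le_add hI0 hI2)
    _ = (C1 + C2) * π := by field_simp
/- geometry helpers -/
lemma half_sum_le (a b x : ℝ) (hx : x = (a + b) / 2) : |x| ≤ 2 * ‖((a, b) : ℝ × ℝ)‖ := by
  have h1 : |a| ≤ ‖((a, b) : ℝ × ℝ)‖ := norm_fst_le ((a, b) : ℝ × ℝ)
  have h2 : |b| ≤ ‖((a, b) : ℝ × ℝ)‖ := norm_snd_le ((a, b) : ℝ × ℝ)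
  subst hx
  calc |(a + b) / 2| = |a + b| / 2 := by rw [abs_div]; norm_num
    _ ≤ (|a| + |b|) / 2 := by linarith [abs_add_le a b]
    _ ≤ 2 * ‖((a, b) : ℝ × ℝ)‖ := by linarith [norm_nonneg ((a, b) : ℝ × ℝ)]

lemma diff_le (a b x : ℝ) (hx : x = b - a) : |x| ≤ 2 * ‖((a, b) : ℝ × ℝ)‖ := by
  have h1 : |a| ≤ ‖((a, b) : ℝ × ℝ)‖ := norm_fst_le ((a, b) : ℝ × ℝ)
  have h2 : |b| ≤ ‖((a, b) : ℝ × ℝ)‖ := norm_snd_le ((a, b) : ℝ × ℝ)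
  subst hx
  calc |b - a| ≤ |b| + |a| := abs_sub _ _
    _ ≤ 2 * ‖((a, b) : ℝ × ℝ)‖ := by linarith

/- family A : slices x ↦ ρ (x - y/2, x + y/2), parameter y -/
lemma hupA (y : ℝ) : ∃ (k : ℕ) (C : ℝ), ∀ x : ℝ,
    ‖x‖ ≤ C * (1 + ‖((-(y / 2) + x * 1, y / 2 + x * 1) : ℝ × ℝ)‖) ^ k := by
  refine ⟨1, 2, fun x => ?_⟩
  have := half_sum_le (-(y / 2) + x * 1) (y / 2 + x * 1) x (by ring)
  rw [Real.norm_eq_abs, pow_one]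
  linarith [norm_nonneg ((-(y / 2) + x * 1, y / 2 + x * 1) : ℝ × ℝ)]

lemma hgeomA (ρ? : Unit) : ∀ d x : ℝ, |d| ≤ 2 * ‖((-(d / 2) + x * 1, d / 2 + x * 1) : ℝ × ℝ)‖ ∧
    |x| ≤ 2 * ‖((-(d / 2) + x * 1, d / 2 + x * 1) : ℝ × ℝ)‖ := fun d x =>
  ⟨diff_le _ _ d (by ring), half_sum_le _ _ x (by ring)⟩

def PA (f : 𝓢(ℝ × ℝ, ℂ)) (y : ℝ) : 𝓢(ℝ, ℂ) :=
  slice ((fun y : ℝ => ((-(y / 2), y / 2) : ℝ × ℝ)) y) (1, 1) (hupA y) f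

lemma PA_apply (f : 𝓢(ℝ × ℝ, ℂ)) (y x : ℝ) : PA f y x = f (x - y / 2, x + y / 2) := by
  rw [PA, slice_apply]
  exact congrArg f (Prod.ext (by ring) (by ring))

lemma famA_decay (f : 𝓢(ℝ × ℝ, ℂ)) : ∃ K : ℝ, 0 ≤ K ∧ ∀ (y ξ : ℝ),
    ((1 + y ^ 2) * (1 + (2 * π * ξ) ^ 2)) * ‖𝓕 (⇑(PA f y)) ξ‖ ≤ K :=
  slice_ft_decay f (fun y : ℝ => ((-(y / 2), y / 2) : ℝ × ℝ)) (1, 1) hupA (hgeomA ())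

/- family B : slices u ↦ ρ (s - u/2, s + u/2), parameter s -/
lemma hupB (s : ℝ) : ∃ (k : ℕ) (C : ℝ), ∀ x : ℝ,
    ‖x‖ ≤ C * (1 + ‖((s + x * (-(1 / 2)), s + x * (1 / 2)) : ℝ × ℝ)‖) ^ k := by
  refine ⟨1, 2, fun x => ?_⟩
  have := diff_le (s + x * (-(1 / 2))) (s + x * (1 / 2)) x (by ring)
  rw [Real.norm_eq_abs, pow_one]
  linarith [norm_nonneg ((s + x * (-(1 / 2)), s + x * (1 / 2)) : ℝ × ℝ)]

lemma hgeomB (u? : Unit) : ∀ d x : ℝ,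
    |d| ≤ 2 * ‖((d + x * (-(1 / 2)), d + x * (1 / 2)) : ℝ × ℝ)‖ ∧
    |x| ≤ 2 * ‖((d + x * (-(1 / 2)), d + x * (1 / 2)) : ℝ × ℝ)‖ := fun d x =>
  ⟨half_sum_le _ _ d (by ring), diff_le _ _ x (by ring)⟩

def PB (f : 𝓢(ℝ × ℝ, ℂ)) (s : ℝ) : 𝓢(ℝ, ℂ) :=
  slice ((fun s : ℝ => ((s, s) : ℝ × ℝ)) s) (-(1 / 2), 1 / 2) (hupB s) f

lemma PB_apply (f : 𝓢(ℝ × ℝ, ℂ)) (s u : ℝ) : PB f s u = f (s - u / 2, s + u / 2) := by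
  rw [PB, slice_apply]
  exact congrArg f (Prod.ext (by ring) (by ring))

lemma famB_decay (f : 𝓢(ℝ × ℝ, ℂ)) : ∃ K : ℝ, 0 ≤ K ∧ ∀ (s ξ : ℝ),
    ((1 + s ^ 2) * (1 + (2 * π * ξ) ^ 2)) * ‖𝓕 (⇑(PB f s)) ξ‖ ≤ K :=
  slice_ft_decay f (fun s : ℝ => ((s, s) : ℝ × ℝ)) (-(1 / 2), 1 / 2) hupB (hgeomB ())

lemma integrable_inv_one_add_affine_sq {a : ℝ} (b : ℝ) (ha : a ≠ 0) :
    Integrable (fun x : ℝ => (1 + (a * x + b) ^ 2)⁻¹) := by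
  have h1' := ((measurePreserving_add_right volume b).integrable_comp
      (g := fun x : ℝ => (1 + x ^ 2)⁻¹)
      integrable_inv_one_add_sq.aestronglyMeasurable).2
      integrable_inv_one_add_sq
  have h1 : Integrable (fun y : ℝ => (1 + (y + b) ^ 2)⁻¹) := h1'
  have h2 := (integrable_comp_mul_left_iff (fun y : ℝ => (1 + (y + b) ^ 2)⁻¹) ha).2 h1
  exact h2.congr (Filter.Eventually.of_forall fun x => by ring_nf)

lemma integral_inv_one_add_affine_sq {a : ℝ} (b : ℝ) (ha : a ≠ 0) :
    ∫ x : ℝ, (1 + (a * x + b) ^ 2)⁻¹ = |a|⁻¹ * π := by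
  have h0 := MeasureTheory.Measure.integral_comp_mul_left
    (fun y : ℝ => (1 + (y + b) ^ 2)⁻¹) a
  have h1 : ∫ y : ℝ, (1 + (y + b) ^ 2)⁻¹ = π := by
    rw [integral_add_right_eq_self (fun y : ℝ => (1 + y ^ 2)⁻¹) b]
    exact integral_univ_inv_one_add_sq
  simp only [h1, smul_eq_mul, abs_inv] at h0
  exact h0

variable (ρ : 𝓢(ℝ × ℝ, ℂ)) (c m : ℝ)

/-- the function g(t) = F(t c, t m) -/
def gf : ℝ → ℂ := fun t =>
  ∫ s : ℝ, Complex.exp (Complex.I * ↑(t * c) * ↑s) * ρ (s - t * m / 2, s + t * m / 2)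

lemma g_eq_ft (t : ℝ) : gf ρ c m t = 𝓕 (⇑(PA ρ (t * m))) (-(t * c) / (2 * π)) := by
  rw [Real.fourier_eq']
  refine integral_congr_ae (Filter.Eventually.of_forall fun s => ?_)
  simp only [RCLike.inner_apply, conj_trivial, smul_eq_mul, PA_apply]
  congr 1
  rw [show (-2 * π * (-(t * c) / (2 * π) * s) : ℝ) = t * c * s by
    field_simp]
  push_cast
  ring

lemma g_cont : Continuous (gf ρ c m) := by
  obtain ⟨C, hC, hdec⟩ := decay2 ρ
  apply continuous_of_dominated (bound := fun s : ℝ => C * (1 + s ^ 2)⁻¹)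
  · intro t
    apply Continuous.aestronglyMeasurable
    exact (Complex.continuous_exp.comp (by fun_prop)).mul (ρ.continuous.comp (by fun_prop))
  · intro t
    refine Filter.Eventually.of_forall fun s => ?_
    have hz := hdec (s - t * m / 2, s + t * m / 2) 0 s
      (by simpa using mul_nonneg (by norm_num) (norm_nonneg _))
      (half_sum_le _ _ s (by ring))
    rw [norm_mul]
    have he : ‖Complex.exp (Complex.I * ↑(t * c) * ↑s)‖ = 1 := by
      rw [show Complex.I * ↑(t * c) * ↑s = ↑(t * c * s) * Complex.I by push_cast; ring]
      exact Complex.norm_exp_ofReal_mul_I _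
    rw [he, one_mul]
    have hx : (0 : ℝ) < 1 + s ^ 2 := by positivity
    rw [show C * (1 + s ^ 2)⁻¹ = C / (1 + s ^ 2) by rw [div_eq_mul_inv],
      le_div_iff₀ hx]
    nlinarith [norm_nonneg (ρ (s - t * m / 2, s + t * m / 2))]
  · exact integrable_inv_one_add_sq.const_mul C
  · refine Filter.Eventually.of_forall fun s => ?_
    exact (Complex.continuous_exp.comp (by fun_prop)).mul (ρ.continuous.comp (by fun_prop))

lemma g_decay (hcm : c ^ 2 + m ^ 2 = 1) :
    ∃ K : ℝ, 0 ≤ K ∧ ∀ t : ℝ, ‖gf ρ c m t‖ ≤ K * (1 + t ^ 2)⁻¹ := by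
  obtain ⟨K, hK, hKf⟩ := famA_decay ρ
  refine ⟨K, hK, fun t => ?_⟩
  have h := hKf (t * m) (-(t * c) / (2 * π))
  rw [show (2 * π * (-(t * c) / (2 * π)) : ℝ) = -(t * c) by
    field_simp] at h
  rw [g_eq_ft]
  have ht : (0 : ℝ) < 1 + t ^ 2 := by positivity
  rw [show K * (1 + t ^ 2)⁻¹ = K / (1 + t ^ 2) by rw [div_eq_mul_inv], le_div_iff₀ ht]
  have hprod : (1 + t ^ 2) ≤ (1 + (t * m) ^ 2) * (1 + (-(t * c)) ^ 2) := by nlinarith [sq_nonneg (t*m), sq_nonneg (t*c), sq_nonneg (t*m*t*c)]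
  nlinarith [norm_nonneg (𝓕 (⇑(PA ρ (t * m))) (-(t * c) / (2 * π))), sq_nonneg (t*m)]

lemma g_integrable (hcm : c ^ 2 + m ^ 2 = 1) : Integrable (gf ρ c m) := by
  obtain ⟨K, hK, hKf⟩ := g_decay ρ c m hcm
  exact (integrable_inv_one_add_sq.const_mul K).mono'
    (g_cont ρ c m).aestronglyMeasurable
    (Filter.Eventually.of_forall fun t => by
      simpa [Real.norm_eq_abs, _root_.abs_of_nonneg (le_of_lt (by positivity : (0:ℝ) < (1 + t^2)⁻¹)),
        _root_.abs_of_nonneg hK] using hKf t)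


/-- case m = 0 : g is Schwartz -/
lemma ftg_int_m0 (hc2 : c ^ 2 = 1) : Integrable (𝓕 (gf ρ c 0)) := by
  have hc : c ≠ 0 := by intro h; rw [h] at hc2; norm_num at hc2
  set a : ℝ := -c / (2 * π) with ha_def
  have ha : a ≠ 0 := by
    simp only [ha_def, div_ne_zero_iff, neg_ne_zero]
    exact ⟨hc, by positivity⟩
  have tg : Function.HasTemperateGrowth (fun t : ℝ => a * t) := by
    have h := (a • (ContinuousLinearMap.id ℝ ℝ)).hasTemperateGrowth
    have he : ⇑(a • (ContinuousLinearMap.id ℝ ℝ)) = fun t : ℝ => a * t := by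
      funext t; simp [smul_eq_mul]
    rwa [he] at h
  have hup : ∃ (k : ℕ) (C : ℝ), ∀ x : ℝ, ‖x‖ ≤ C * (1 + ‖a * x‖) ^ k := by
    refine ⟨1, |a|⁻¹, fun x => ?_⟩
    have h1 : (0:ℝ) < |a| := abs_pos.2 ha
    rw [Real.norm_eq_abs, Real.norm_eq_abs, pow_one, abs_mul, mul_add, mul_one]
    have h2 : |a|⁻¹ * (|a| * |x|) = |x| := by field_simp
    rw [h2]
    have h3 : (0:ℝ) ≤ |a|⁻¹ := by positivity
    linarith
  set G0 : 𝓢(ℝ, ℂ) :=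
    SchwartzMap.compCLM ℝ tg hup (SchwartzMap.fourierTransformCLM ℂ (PA ρ 0)) with hG0
  have hg0 : gf ρ c 0 = ⇑G0 := by
    funext t
    rw [g_eq_ft, show t * (0:ℝ) = 0 by ring]
    have hGt : G0 t = 𝓕 (⇑(PA ρ 0)) (a * t) := by
      rw [hG0]
      rw [SchwartzMap.compCLM_apply]
      simp only [Function.comp_apply, SchwartzMap.fourierTransformCLM_apply, SchwartzMap.fourier_coe]
    rw [hGt]
    congr 1
    rw [ha_def]; ring
  rw [hg0, show 𝓕 ⇑G0 = ⇑(SchwartzMap.fourierTransformCLM ℂ G0) from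
    rfl]
  exact SchwartzMap.integrable _

/-- case m ≠ 0 : Fubini argument -/
lemma ftg_int_m1 (hcm : c ^ 2 + m ^ 2 = 1) (hm : m ≠ 0) : Integrable (𝓕 (gf ρ c m)) := by
  obtain ⟨D, hD, hDf⟩ := decay2 ρ
  obtain ⟨K, hK, hKf⟩ := famB_decay ρ
  have hπ : (0:ℝ) < π := Real.pi_pos
  set W : ℝ → ℝ → ℝ := fun ξ s =>
    |m|⁻¹ * K * ((1 + s ^ 2)⁻¹ * (1 + (2 * π / m * ξ + -(s * c) / m) ^ 2)⁻¹) with hW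
  have hWcont : Continuous fun p : ℝ × ℝ => W p.1 p.2 := by
    show Continuous fun p : ℝ × ℝ =>
      |m|⁻¹ * K * ((1 + p.2 ^ 2)⁻¹ * (1 + (2 * π / m * p.1 + -(p.2 * c) / m) ^ 2)⁻¹)
    have h1 : Continuous fun p : ℝ × ℝ => (1 + p.2 ^ 2)⁻¹ :=
      Continuous.inv₀ (by fun_prop) (fun p => by positivity)
    have h2 : Continuous fun p : ℝ × ℝ => (1 + (2 * π / m * p.1 + -(p.2 * c) / m) ^ 2)⁻¹ :=
      Continuous.inv₀ (by fun_prop) (fun p => by positivity)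
    exact continuous_const.mul (h1.mul h2)
  have ha : (2 * π / m : ℝ) ≠ 0 := by
    apply div_ne_zero _ hm; positivity
  have hWnn : ∀ ξ s : ℝ, 0 ≤ W ξ s := by
    intro ξ s
    have h1 : (0:ℝ) < 1 + s ^ 2 := by positivity
    have h2 : (0:ℝ) < 1 + (2 * π / m * ξ + -(s * c) / m) ^ 2 := by positivity
    have h3 : (0:ℝ) ≤ |m|⁻¹ := by positivity
    rw [hW]
    positivity
  have hWs : ∀ ξ : ℝ, Integrable (fun s : ℝ => W ξ s) := by
    intro ξ
    refine (integrable_inv_one_add_sq.const_mul (|m|⁻¹ * K)).mono'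
      ((hWcont.comp (continuous_const.prodMk continuous_id)).aestronglyMeasurable)
      (Filter.Eventually.of_forall fun s => ?_)
    rw [Real.norm_eq_abs, _root_.abs_of_nonneg (hWnn ξ s), hW]
    have h1 : (0:ℝ) < 1 + s ^ 2 := by positivity
    have h2 : (0:ℝ) < 1 + (2 * π / m * ξ + -(s * c) / m) ^ 2 := by positivity
    have h4 : (1 + (2 * π / m * ξ + -(s * c) / m) ^ 2)⁻¹ ≤ 1 := by
      rw [inv_le_one_iff₀]; right; nlinarith
    have h5 : (0:ℝ) ≤ |m|⁻¹ * K := by positivity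
    have h6 : (0:ℝ) ≤ (1 + s^2)⁻¹ := by positivity
    calc |m|⁻¹ * K * ((1 + s ^ 2)⁻¹ * (1 + (2 * π / m * ξ + -(s * c) / m) ^ 2)⁻¹)
        ≤ |m|⁻¹ * K * ((1 + s ^ 2)⁻¹ * 1) := by
          apply mul_le_mul_of_nonneg_left _ h5
          exact mul_le_mul_of_nonneg_left h4 h6
      _ = |m|⁻¹ * K * (1 + s ^ 2)⁻¹ := by ring
  -- the pointwise representation of 𝓕 g
  have hrep : ∀ ξ : ℝ, 𝓕 (gf ρ c m) ξ =
      ∫ s : ℝ, |m⁻¹| • 𝓕 (⇑(PB ρ s)) ((2 * π * ξ - s * c) / (2 * π * m)) := by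
    intro ξ
    have h1 : 𝓕 (gf ρ c m) ξ = ∫ t : ℝ, ∫ s : ℝ,
        Complex.exp (↑(t * (s * c - 2 * π * ξ)) * Complex.I) *
          ρ (s - t * m / 2, s + t * m / 2) := by
      rw [Real.fourier_eq']
      refine integral_congr_ae (Filter.Eventually.of_forall fun t => ?_)
      beta_reduce
      simp only [RCLike.inner_apply, conj_trivial, smul_eq_mul, gf]
      rw [← integral_const_mul]
      refine integral_congr_ae (Filter.Eventually.of_forall fun s => ?_)
      beta_reduce
      rw [← mul_assoc, ← Complex.exp_add]
      congr 2
      push_cast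
      ring
    have hintg : Integrable (Function.uncurry fun t s : ℝ =>
        Complex.exp (↑(t * (s * c - 2 * π * ξ)) * Complex.I) *
          ρ (s - t * m / 2, s + t * m / 2)) := by
      have hbd : Integrable (fun p : ℝ × ℝ =>
          D * ((1 + (p.1 * m) ^ 2)⁻¹ * (1 + p.2 ^ 2)⁻¹)) := by
        refine Integrable.const_mul ?_ D
        rw [MeasureTheory.Measure.volume_eq_prod]
        exact Integrable.mul_prod
          ((integrable_comp_mul_right_iff (fun u : ℝ => (1 + u ^ 2)⁻¹) hm).2
            integrable_inv_one_add_sq) integrable_inv_one_add_sq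
      refine hbd.mono' ?_ (Filter.Eventually.of_forall fun p => ?_)
      · apply Continuous.aestronglyMeasurable
        exact (Complex.continuous_exp.comp (by fun_prop)).mul (ρ.continuous.comp (by fun_prop))
      · rw [Function.uncurry_apply_pair, norm_mul, Complex.norm_exp_ofReal_mul_I, one_mul]
        have hz := hDf (p.2 - p.1 * m / 2, p.2 + p.1 * m / 2) (p.1 * m) p.2
          (diff_le _ _ _ (by ring)) (half_sum_le _ _ _ (by ring))
        have h1 : (0:ℝ) < 1 + (p.1 * m) ^ 2 := by positivity
        have h2 : (0:ℝ) < 1 + p.2 ^ 2 := by positivity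
        rw [show D * ((1 + (p.1 * m) ^ 2)⁻¹ * (1 + p.2 ^ 2)⁻¹)
            = D / ((1 + (p.1 * m) ^ 2) * (1 + p.2 ^ 2)) by field_simp,
          le_div_iff₀ (by positivity)]
        nlinarith [norm_nonneg (ρ (p.2 - p.1 * m / 2, p.2 + p.1 * m / 2))]
    rw [h1, integral_integral_swap hintg]
    refine integral_congr_ae (Filter.Eventually.of_forall fun s => ?_)
    beta_reduce
    have hsub : ∀ t : ℝ, Complex.exp (↑(t * (s * c - 2 * π * ξ)) * Complex.I) *
        ρ (s - t * m / 2, s + t * m / 2) =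
        (fun u : ℝ => Complex.exp (↑(u / m * (s * c - 2 * π * ξ)) * Complex.I) * PB ρ s u)
          (t * m) := by
      intro t
      beta_reduce
      simp only [PB_apply]
      rw [show (t * m / m : ℝ) = t from by field_simp]
    refine (integral_congr_ae (Filter.Eventually.of_forall hsub)).trans ?_
    refine (MeasureTheory.Measure.integral_comp_mul_right
      (fun u : ℝ => Complex.exp (↑(u / m * (s * c - 2 * π * ξ)) * Complex.I) * PB ρ s u)
      m).trans ?_
    congr 1
    rw [Real.fourier_eq']
    refine integral_congr_ae (Filter.Eventually.of_forall fun u => ?_)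
    beta_reduce
    simp only [RCLike.inner_apply, conj_trivial, smul_eq_mul]
    congr 2
    rw [show (-2 * π * ((2 * π * ξ - s * c) / (2 * π * m) * u) : ℝ)
        = u / m * (s * c - 2 * π * ξ) from by field_simp; ring]
  -- the pointwise bound
  have hbound : ∀ ξ : ℝ, ‖𝓕 (gf ρ c m) ξ‖ ≤ ∫ s : ℝ, W ξ s := by
    intro ξ
    rw [hrep ξ]
    refine (norm_integral_le_integral_norm _).trans ?_
    refine integral_mono_of_nonneg (Filter.Eventually.of_forall fun s => norm_nonneg _)
      (hWs ξ) (Filter.Eventually.of_forall fun s => ?_)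
    show ‖|m⁻¹| • 𝓕 (⇑(PB ρ s)) ((2 * π * ξ - s * c) / (2 * π * m))‖ ≤ W ξ s
    have h := hKf s ((2 * π * ξ - s * c) / (2 * π * m))
    rw [show (2 * π * ((2 * π * ξ - s * c) / (2 * π * m)) : ℝ)
        = 2 * π / m * ξ + -(s * c) / m from by field_simp; ring] at h
    rw [norm_smul, Real.norm_eq_abs, _root_.abs_abs, abs_inv]
    have h1 : (0:ℝ) < 1 + s ^ 2 := by positivity
    have h2 : (0:ℝ) < 1 + (2 * π / m * ξ + -(s * c) / m) ^ 2 := by positivity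
    have h3 : (0:ℝ) < |m| := abs_pos.2 hm
    rw [hW]
    beta_reduce
    have heq : |m|⁻¹ * K * ((1 + s ^ 2)⁻¹ * (1 + (2 * π / m * ξ + -(s * c) / m) ^ 2)⁻¹)
        = |m|⁻¹ * (K / ((1 + s ^ 2) * (1 + (2 * π / m * ξ + -(s * c) / m) ^ 2))) := by
      field_simp
    rw [heq]
    apply mul_le_mul_of_nonneg_left _ (by positivity)
    rw [le_div_iff₀ (by positivity)]
    nlinarith [norm_nonneg (𝓕 (⇑(PB ρ s)) ((2 * π * ξ - s * c) / (2 * π * m)))]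
  -- integrability of the dominating kernel, via Tonelli in the (s, ξ) order
  have hWint2 : Integrable (fun p : ℝ × ℝ => W p.2 p.1)
      ((volume : Measure ℝ).prod volume) := by
    have hmeas : AEStronglyMeasurable (fun p : ℝ × ℝ => W p.2 p.1)
        ((volume : Measure ℝ).prod volume) := by
      rw [← MeasureTheory.Measure.volume_eq_prod]
      exact (hWcont.comp (continuous_snd.prodMk continuous_fst)).aestronglyMeasurable
    rw [integrable_prod_iff hmeas]
    constructor
    · refine Filter.Eventually.of_forall fun s => ?_
      exact (((integrable_inv_one_add_affine_sq (-(s * c) / m) ha).const_mul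
        ((1 + s ^ 2)⁻¹)).const_mul (|m|⁻¹ * K))
    · have hval : ∀ s : ℝ, ∫ ξ : ℝ, ‖W ξ s‖ = K / 2 * (1 + s ^ 2)⁻¹ := by
        intro s
        have h0 : ∀ ξ : ℝ, ‖W ξ s‖ = (|m|⁻¹ * K * (1 + s ^ 2)⁻¹) *
            (1 + (2 * π / m * ξ + -(s * c) / m) ^ 2)⁻¹ := by
          intro ξ
          rw [Real.norm_eq_abs, _root_.abs_of_nonneg (hWnn ξ s), hW]
          ring
        rw [integral_congr_ae (Filter.Eventually.of_forall h0), integral_const_mul,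
          integral_inv_one_add_affine_sq (-(s * c) / m) ha]
        have habs : |2 * π / m| = 2 * π / |m| := by
          rw [abs_div, _root_.abs_of_pos (by positivity : (0:ℝ) < 2 * π)]
        rw [habs]
        have hm' : (0:ℝ) < |m| := abs_pos.2 hm
        field_simp
      refine ((integrable_inv_one_add_sq.const_mul (K / 2)).congr ?_)
      exact Filter.Eventually.of_forall fun s => (hval s).symm
  have hWint : Integrable (fun p : ℝ × ℝ => W p.1 p.2)
      ((volume : Measure ℝ).prod volume) := hWint2.swap
  have hB : Integrable (fun ξ : ℝ => ∫ s : ℝ, W ξ s) := hWint.integral_prod_left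
  refine hB.mono' ?_ (Filter.Eventually.of_forall hbound)
  exact (VectorFourier.fourierIntegral_continuous Real.continuous_fourierChar
    (by exact continuous_inner) (g_integrable ρ c m hcm)).aestronglyMeasurable

lemma main_core (ρ : 𝓢(ℝ × ℝ, ℂ)) (c m : ℝ) (hcm : c ^ 2 + m ^ 2 = 1) (r : ℝ) :
    ∫ X : ℝ, Complex.exp (Complex.I * ↑r * ↑X) *
      ((1 / (2 * π) : ℝ) * 𝓕 (gf ρ c m) ((2 * π)⁻¹ * X)) = gf ρ c m r := by
  have hπ : (0:ℝ) < π := Real.pi_pos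
  have hftg : Integrable (𝓕 (gf ρ c m)) := by
    rcases eq_or_ne m 0 with hm | hm
    · subst hm
      exact ftg_int_m0 ρ c (by simpa using hcm)
    · exact ftg_int_m1 ρ c m hcm hm
  have hinv : 𝓕⁻ (𝓕 (gf ρ c m)) r = gf ρ c m r :=
    MeasureTheory.Integrable.fourierInv_fourier_eq (g_integrable ρ c m hcm) hftg
      ((g_cont ρ c m).continuousAt)
  set Φ : ℝ → ℂ := fun ξ => Complex.exp (↑(2 * π * (ξ * r)) * Complex.I) * 𝓕 (gf ρ c m) ξ
    with hΦ
  have step1 : ∫ X : ℝ, Complex.exp (Complex.I * ↑r * ↑X) *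
      ((1 / (2 * π) : ℝ) * 𝓕 (gf ρ c m) ((2 * π)⁻¹ * X))
      = ∫ X : ℝ, (1 / (2 * π) : ℝ) • Φ ((2 * π)⁻¹ * X) := by
    refine integral_congr_ae (Filter.Eventually.of_forall fun X => ?_)
    beta_reduce
    rw [hΦ]
    beta_reduce
    rw [Complex.real_smul]
    rw [show (2 * π * ((2 * π)⁻¹ * X * r) : ℝ) = r * X from by field_simp]
    push_cast
    ring
  rw [step1, integral_smul, MeasureTheory.Measure.integral_comp_mul_left Φ ((2 * π)⁻¹),
    smul_smul]
  rw [show ((1 / (2 * π) : ℝ) * |((2 * π)⁻¹)⁻¹| : ℝ) = 1 from by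
    rw [inv_inv, abs_of_pos (by positivity : (0:ℝ) < 2 * π)]; field_simp]
  rw [one_smul]
  rw [← hinv, Real.fourierInv_eq']
  refine integral_congr_ae (Filter.Eventually.of_forall fun ξ => ?_)
  beta_reduce
  simp only [RCLike.inner_apply, conj_trivial, smul_eq_mul]
  rw [hΦ, mul_comm r ξ]

end
end Tomog

open Real in
theorem tomogram_inversion (ρ : SchwartzMap (ℝ × ℝ) ℂ) (ω : ℝ → ℝ → ℂ) (F : ℝ × ℝ → ℂ)
    (hω : ∀ X φ : ℝ, ω X φ = (1 / (2 * π) : ℝ) *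
      ∫ t : ℝ, ∫ s : ℝ, Complex.exp (Complex.I * (s * Real.cos φ - X) * t) *
        ρ (s - t * Real.sin φ / 2, s + t * Real.sin φ / 2))
    (hF : ∀ x y : ℝ, F (x, y) =
      ∫ t : ℝ, Complex.exp (Complex.I * x * t) * ρ (t - y / 2, t + y / 2)) :
    ∀ (r : ℝ) (φ : ℝ), φ ∈ Set.Ico (0 : ℝ) (2 * π) →
      F (r * Real.cos φ, r * Real.sin φ)
        = ∫ X : ℝ, Complex.exp (Complex.I * r * X) * ω X φ := by
  intro r φ _
  have hπ : (0:ℝ) < π := Real.pi_pos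
  have hcm : Real.cos φ ^ 2 + Real.sin φ ^ 2 = 1 := Real.cos_sq_add_sin_sq φ
  have hgF : F (r * Real.cos φ, r * Real.sin φ) = Tomog.gf ρ (Real.cos φ) (Real.sin φ) r := by
    rw [hF (r * Real.cos φ) (r * Real.sin φ)]
    rfl
  have hω' : ∀ X : ℝ, ω X φ = (1 / (2 * π) : ℝ) *
      𝓕 (Tomog.gf ρ (Real.cos φ) (Real.sin φ)) ((2 * π)⁻¹ * X) := by
    intro X
    rw [hω X φ]
    congr 1
    rw [Real.fourier_eq']
    refine (integral_congr_ae (Filter.Eventually.of_forall fun t => ?_)).symm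
    beta_reduce
    simp only [RCLike.inner_apply, conj_trivial, smul_eq_mul, Tomog.gf]
    rw [← integral_const_mul]
    refine (integral_congr_ae (Filter.Eventually.of_forall fun s => ?_)).symm
    beta_reduce
    rw [← mul_assoc, ← Complex.exp_add]
    congr 2
    rw [show (-2 * π * ((2 * π)⁻¹ * X * t) : ℝ) = -(X * t) from by field_simp]
    push_cast
    ring
  rw [hgF, ← Tomog.main_core ρ (Real.cos φ) (Real.sin φ) hcm r]
  refine integral_congr_ae (Filter.Eventually.of_forall fun X => ?_)
  beta_reduce
  rw [hω' X]
end

section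
/- For ρ ∈ S(ℝ²) and each fixed φ, the function X ↦ ω(X, φ) = (1/2π) ∫∫ e^{i(s cos φ − X)t} ρ(s − (t sin φ)/2, s + (t sin φ)/2) ds dt belongs to the Schwartz space S(ℝ). -/
open Real MeasureTheory SchwartzMap Complex
open scoped FourierTransform

lemma temperate_exp_aux {E' : Type*} [NormedAddCommGroup E'] [NormedSpace ℝ E']
    (e : E' → ℂ) (he : ContDiff ℝ (⊤ : ℕ∞) e) (hbd : ∀ x, ‖e x‖ ≤ 1)
    (A : E' →L[ℝ] (E' →L[ℝ] ℂ)) (hA : ∀ x, fderiv ℝ e x = e x • A x) :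
    Function.HasTemperateGrowth e := by
  refine ⟨he, ?_⟩
  suffices H : ∀ n : ℕ, ∃ (k : ℕ) (C : ℝ), 0 ≤ C ∧
      ∀ i ≤ n, ∀ x, ‖iteratedFDeriv ℝ i e x‖ ≤ C * (1 + ‖x‖) ^ k by
    intro n
    obtain ⟨k, C, _, h⟩ := H n
    exact ⟨k, C, h n le_rfl⟩
  intro n
  induction n with
  | zero =>
      refine ⟨0, 1, zero_le_one, ?_⟩
      intro i hi x
      interval_cases i
      simpa using hbd x
  | succ n ih =>
      obtain ⟨k, C, hC, h⟩ := ih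
      obtain ⟨k', C', hC', h'⟩ := A.hasTemperateGrowth.norm_iteratedFDeriv_le_uniform n
      refine ⟨k + k', max C (2 ^ n * (C * C')), le_trans hC (le_max_left _ _), ?_⟩
      intro i hi x
      have hx1 : (1 : ℝ) ≤ 1 + ‖x‖ := by simp [norm_nonneg]
      have hpow : (1 + ‖x‖) ^ k * (1 + ‖x‖) ^ k' = (1 + ‖x‖) ^ (k + k') := (pow_add _ _ _).symm
      by_cases hin : i ≤ n
      · calc ‖iteratedFDeriv ℝ i e x‖ ≤ C * (1 + ‖x‖) ^ k := h i hin x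
          _ ≤ max C (2 ^ n * (C * C')) * (1 + ‖x‖) ^ (k + k') := by
              apply mul_le_mul (le_max_left _ _) (pow_le_pow_right₀ hx1 (Nat.le_add_right _ _))
                (by positivity) (le_trans hC (le_max_left _ _))
      · have hieq : i = n + 1 := by omega
        subst hieq
        rw [← norm_iteratedFDeriv_fderiv]
        have hfd : fderiv ℝ e = fun y => e y • A y := funext hA
        rw [hfd]
        have hsm := norm_iteratedFDeriv_smul_le (𝕜 := ℝ) (f := e) (g := fun y => A y)
          he (A.contDiff) x (n := n) (mod_cast le_top)
        refine hsm.trans ?_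
        have hbound : ∀ j ∈ Finset.range (n + 1),
            (n.choose j : ℝ) * ‖iteratedFDeriv ℝ j e x‖ * ‖iteratedFDeriv ℝ (n - j) (fun y => (A : E' → (E' →L[ℝ] ℂ)) y) x‖
              ≤ (n.choose j : ℝ) * ((C * C') * (1 + ‖x‖) ^ (k + k')) := by
          intro j hj
          rw [Finset.mem_range] at hj
          have h1 := h j (by omega) x
          have h2 := h' (n - j) (by omega) x
          have := mul_le_mul h1 h2 (norm_nonneg _) (by positivity)
          rw [mul_assoc]
          refine mul_le_mul_of_nonneg_left ?_ (by positivity)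
          calc ‖iteratedFDeriv ℝ j e x‖ * ‖iteratedFDeriv ℝ (n - j) (fun y => (A : E' → (E' →L[ℝ] ℂ)) y) x‖
              ≤ (C * (1 + ‖x‖) ^ k) * (C' * (1 + ‖x‖) ^ k') := this
            _ = (C * C') * (1 + ‖x‖) ^ (k + k') := by rw [← hpow]; ring
        calc (∑ j ∈ Finset.range (n + 1), (n.choose j : ℝ) * ‖iteratedFDeriv ℝ j e x‖ *
                ‖iteratedFDeriv ℝ (n - j) (fun y => (A : E' → (E' →L[ℝ] ℂ)) y) x‖)
            ≤ ∑ j ∈ Finset.range (n + 1), (n.choose j : ℝ) * ((C * C') * (1 + ‖x‖) ^ (k + k')) :=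
              Finset.sum_le_sum hbound
          _ = (2 ^ n : ℝ) * ((C * C') * (1 + ‖x‖) ^ (k + k')) := by
              rw [← Finset.sum_mul]
              norm_cast
              rw [Nat.sum_range_choose]
          _ ≤ max C (2 ^ n * (C * C')) * (1 + ‖x‖) ^ (k + k') := by
              rw [← mul_assoc]
              exact mul_le_mul_of_nonneg_right (le_max_right _ _) (by positivity)

lemma temperate_char (c : ℝ) :
    Function.HasTemperateGrowth (fun p : ℝ × ℝ => Complex.exp ((c * (p.1 * p.2)) • Complex.I)) := by
  set M₁ : ℝ × ℝ →L[ℝ] ℂ :=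
    (Complex.I * c) • (Complex.ofRealCLM.comp (ContinuousLinearMap.snd ℝ ℝ ℝ)) with hM₁
  set M₂ : ℝ × ℝ →L[ℝ] ℂ :=
    (Complex.I * c) • (Complex.ofRealCLM.comp (ContinuousLinearMap.fst ℝ ℝ ℝ)) with hM₂
  set A : (ℝ × ℝ) →L[ℝ] ((ℝ × ℝ) →L[ℝ] ℂ) :=
    (ContinuousLinearMap.fst ℝ ℝ ℝ).smulRight M₁ + (ContinuousLinearMap.snd ℝ ℝ ℝ).smulRight M₂ with hA
  have he : ContDiff ℝ (⊤ : ℕ∞) (fun p : ℝ × ℝ => Complex.exp ((c * (p.1 * p.2)) • Complex.I)) :=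
    ((contDiff_const.mul (contDiff_fst.mul contDiff_snd)).smul contDiff_const).cexp
  refine temperate_exp_aux _ he (fun x => ?_) A (fun x => ?_)
  · rw [Complex.norm_exp]
    simp [Complex.real_smul]
  · have h12 : HasFDerivAt (fun p : ℝ × ℝ => p.1 * p.2)
        (x.1 • (ContinuousLinearMap.snd ℝ ℝ ℝ) + x.2 • (ContinuousLinearMap.fst ℝ ℝ ℝ)) x :=
      hasFDerivAt_fst.mul hasFDerivAt_snd
    have hq := h12.const_mul c
    have hE := (hq.smul_const Complex.I).cexp
    rw [hE.fderiv]
    congr 1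
    refine ContinuousLinearMap.ext fun v => ?_
    simp only [hA, hM₁, hM₂, ContinuousLinearMap.smulRight_apply, ContinuousLinearMap.add_apply,
      ContinuousLinearMap.coe_smul', Pi.smul_apply, ContinuousLinearMap.coe_comp',
      Function.comp_apply, Complex.ofRealCLM_apply, ContinuousLinearMap.coe_fst',
      ContinuousLinearMap.coe_snd', smul_eq_mul, Complex.real_smul]
    push_cast
    ring

noncomputable def scaleCLE (a : ℝ) (ha : a ≠ 0) : ℝ ≃L[ℝ] ℝ :=
  ContinuousLinearEquiv.equivOfInverse (a • ContinuousLinearMap.id ℝ ℝ)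
    (a⁻¹ • ContinuousLinearMap.id ℝ ℝ)
    (fun x => by simp [smul_eq_mul, ← mul_assoc, inv_mul_cancel₀ ha])
    (fun x => by simp [smul_eq_mul, ← mul_assoc, mul_inv_cancel₀ ha])

@[simp] lemma scaleCLE_apply (a : ℝ) (ha : a ≠ 0) (x : ℝ) : scaleCLE a ha x = a * x := by
  simp [scaleCLE]

noncomputable def shearCLE (b : ℝ) (hb : b ≠ 0) : (ℝ × ℝ) ≃L[ℝ] (ℝ × ℝ) :=
  ContinuousLinearEquiv.equivOfInverse
    (((ContinuousLinearMap.fst ℝ ℝ ℝ) - (b / 2) • (ContinuousLinearMap.snd ℝ ℝ ℝ)).prod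
      ((ContinuousLinearMap.fst ℝ ℝ ℝ) + (b / 2) • (ContinuousLinearMap.snd ℝ ℝ ℝ)))
    (((1 / 2 : ℝ) • (ContinuousLinearMap.fst ℝ ℝ ℝ) + (1 / 2 : ℝ) • (ContinuousLinearMap.snd ℝ ℝ ℝ)).prod
      (b⁻¹ • (ContinuousLinearMap.snd ℝ ℝ ℝ) - b⁻¹ • (ContinuousLinearMap.fst ℝ ℝ ℝ)))
    (fun x => by
      ext
      · simp only [ContinuousLinearMap.coe_comp', ContinuousLinearMap.prod_apply,
          ContinuousLinearMap.coe_sub', ContinuousLinearMap.coe_smul', ContinuousLinearMap.add_apply,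
          ContinuousLinearMap.coe_fst', ContinuousLinearMap.coe_snd', Pi.sub_apply, Pi.smul_apply,
          Pi.add_apply, smul_eq_mul]
        field_simp
        ring
      · simp only [ContinuousLinearMap.coe_comp', ContinuousLinearMap.prod_apply,
          ContinuousLinearMap.coe_sub', ContinuousLinearMap.coe_smul', ContinuousLinearMap.add_apply,
          ContinuousLinearMap.coe_fst', ContinuousLinearMap.coe_snd', Pi.sub_apply, Pi.smul_apply,
          Pi.add_apply, smul_eq_mul]
        field_simp
        ring)
    (fun x => by
      ext
      · simp only [ContinuousLinearMap.coe_comp', ContinuousLinearMap.prod_apply,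
          ContinuousLinearMap.coe_sub', ContinuousLinearMap.coe_smul', ContinuousLinearMap.add_apply,
          ContinuousLinearMap.coe_fst', ContinuousLinearMap.coe_snd', Pi.sub_apply, Pi.smul_apply,
          Pi.add_apply, smul_eq_mul]
        field_simp
        ring
      · simp only [ContinuousLinearMap.coe_comp', ContinuousLinearMap.prod_apply,
          ContinuousLinearMap.coe_sub', ContinuousLinearMap.coe_smul', ContinuousLinearMap.add_apply,
          ContinuousLinearMap.coe_fst', ContinuousLinearMap.coe_snd', Pi.sub_apply, Pi.smul_apply,
          Pi.add_apply, smul_eq_mul]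
        field_simp
        ring)

@[simp] lemma shearCLE_apply (b : ℝ) (hb : b ≠ 0) (p : ℝ × ℝ) :
    shearCLE b hb p = (p.1 - b / 2 * p.2, p.1 + b / 2 * p.2) := by
  simp [shearCLE]

open Real in
theorem tomogram_schwartz (ρ : SchwartzMap (ℝ × ℝ) ℂ) (ω : ℝ → ℝ → ℂ)
    (hω : ∀ X φ : ℝ, ω X φ = (1 / (2 * π) : ℝ) *
      ∫ t : ℝ, ∫ s : ℝ, Complex.exp (Complex.I * (s * Real.cos φ - X) * t) *
        ρ (s - t * Real.sin φ / 2, s + t * Real.sin φ / 2)) :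
    ∀ φ : ℝ, ∃ g : SchwartzMap ℝ ℂ, ∀ X : ℝ, g X = ω X φ := by
  intro φ
  by_cases hb : Real.sin φ = 0
  · -- degenerate case
    have hc : Real.cos φ ≠ 0 := by
      intro h
      have := Real.sin_sq_add_cos_sq φ
      rw [hb, h] at this; norm_num at this
    have h2π : (2 * π) ≠ 0 := by positivity
    have ha1 : (-Real.cos φ / (2 * π)) ≠ 0 := by
      simp [div_eq_zero_iff, hc, h2π]
    have ha2 : (1 / (2 * π)) ≠ 0 := by positivity
    set j : ℝ →L[ℝ] ℝ × ℝ := (ContinuousLinearMap.id ℝ ℝ).prod (ContinuousLinearMap.id ℝ ℝ) with hj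
    have hjup : ∃ (k : ℕ) (C : ℝ), ∀ x : ℝ, ‖x‖ ≤ C * (1 + ‖j x‖) ^ k := by
      refine ⟨1, 1, fun x => ?_⟩
      simp [hj, Prod.norm_def]
    set u : SchwartzMap ℝ ℂ := compCLM ℝ j.hasTemperateGrowth hjup ρ with huDef
    have hu : ∀ s : ℝ, u s = ρ (s, s) := fun s => rfl
    set v : SchwartzMap ℝ ℂ := compCLMOfContinuousLinearEquiv ℝ
      (scaleCLE (-Real.cos φ / (2 * π)) ha1) (fourierTransformCLM ℝ u) with hvDef
    have hv : ∀ t : ℝ, v t = 𝓕 (⇑u) ((-Real.cos φ / (2 * π)) * t) := fun t => by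
      simp [hvDef, SchwartzMap.fourier_coe]
    refine ⟨(1 / (2 * π) : ℝ) • compCLMOfContinuousLinearEquiv ℝ
      (scaleCLE (1 / (2 * π)) ha2) (fourierTransformCLM ℝ v), fun X => ?_⟩
    have hgX : ((1 / (2 * π) : ℝ) • compCLMOfContinuousLinearEquiv ℝ
        (scaleCLE (1 / (2 * π)) ha2) (fourierTransformCLM ℝ v)) X
        = ((1 / (2 * π) : ℝ) : ℂ) * 𝓕 (⇑v) ((1 / (2 * π)) * X) := by
      simp [Complex.real_smul, SchwartzMap.fourier_coe]
    rw [hgX, hω]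
    have key : ∀ t : ℝ, (∫ s : ℝ, Complex.exp (Complex.I * (s * Real.cos φ - X) * t) *
        ρ (s - t * Real.sin φ / 2, s + t * Real.sin φ / 2))
        = Complex.exp (((-2 * π * (t * ((1 / (2 * π)) * X)) : ℝ)) * Complex.I) * v t := by
      intro t
      have hvt : v t = ∫ s : ℝ, Complex.exp (((-2 * π * (s * ((-Real.cos φ / (2 * π)) * t)) : ℝ))
          * Complex.I) * u s := by
        rw [hv, Real.fourier_eq']
        simp [RCLike.inner_apply, smul_eq_mul]
        congr 1
        funext s
        ring_nf
      rw [hvt, ← MeasureTheory.integral_const_mul]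
      refine integral_congr_ae (Filter.Eventually.of_forall fun s => ?_)
      dsimp only
      rw [hb, hu, ← mul_assoc, ← Complex.exp_add]
      norm_num
      left
      congr 1
      have hπC : (π : ℂ) ≠ 0 := by exact_mod_cast Real.pi_ne_zero
      field_simp
      ring
    have hout : (∫ t : ℝ, ∫ s : ℝ, Complex.exp (Complex.I * (s * Real.cos φ - X) * t) *
        ρ (s - t * Real.sin φ / 2, s + t * Real.sin φ / 2))
        = 𝓕 (⇑v) ((1 / (2 * π)) * X) := by
      rw [Real.fourier_eq']
      refine integral_congr_ae (Filter.Eventually.of_forall fun t => ?_)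
      dsimp only
      rw [key t, smul_eq_mul]
      simp [RCLike.inner_apply]
      left
      ring_nf
    rw [hout]
  ·
      set b := Real.sin φ with hbdef
      set c := Real.cos φ with hcdef
      set G : SchwartzMap (ℝ × ℝ) ℂ := compCLMOfContinuousLinearEquiv ℝ (shearCLE b hb) ρ with hGdef
      have hG : ∀ p : ℝ × ℝ, G p = ρ (p.1 - b / 2 * p.2, p.1 + b / 2 * p.2) := fun p => by
        simp [hGdef]
      set K : SchwartzMap (ℝ × ℝ) ℂ :=
        bilinLeftCLM (ContinuousLinearMap.mul ℝ ℂ) (temperate_char c) G with hKdef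
      have hK : ∀ p : ℝ × ℝ, K p = G p * Complex.exp ((c * (p.1 * p.2)) • Complex.I) := fun p => rfl
      set K' : SchwartzMap ℂ ℂ := compCLMOfContinuousLinearEquiv ℝ Complex.equivRealProdCLM K with hK'def
      have hK' : ∀ z : ℂ, K' z = K (z.re, z.im) := fun z => rfl
      set m : ℝ →L[ℝ] ℂ :=
        (((1 / (2 * π) : ℝ)) • (ContinuousLinearMap.id ℝ ℝ)).smulRight Complex.I with hmdef
      have hm : ∀ X : ℝ, m X = ((1 / (2 * π)) * X : ℝ) • Complex.I := fun X => by
        simp [hmdef, smul_eq_mul]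
      have hmnorm : ∀ X : ℝ, ‖m X‖ = |X| / (2 * π) := by
        intro X
        rw [hm, norm_smul]
        rw [Real.norm_eq_abs, Complex.norm_I, mul_one, abs_mul,
          abs_of_pos (show (0:ℝ) < 1 / (2 * π) by positivity)]
        ring
      have hm_up : ∃ (k : ℕ) (C : ℝ), ∀ X : ℝ, ‖X‖ ≤ C * (1 + ‖m X‖) ^ k := by
        refine ⟨1, 2 * π, fun X => ?_⟩
        rw [hmnorm, pow_one, Real.norm_eq_abs]
        have hπ : (0:ℝ) < 2 * π := by positivity
        rw [mul_add, mul_one, mul_div_cancel₀ _ hπ.ne']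
        linarith [abs_nonneg X, hπ.le]
      refine ⟨(1 / (2 * π) : ℝ) • compCLM ℝ m.hasTemperateGrowth hm_up (fourierTransformCLM ℝ K'),
        fun X => ?_⟩
      have hgX : ((1 / (2 * π) : ℝ) • compCLM ℝ m.hasTemperateGrowth hm_up
          (fourierTransformCLM ℝ K')) X = ((1 / (2 * π) : ℝ) : ℂ) * 𝓕 (⇑K') (m X) := by
        simp [Complex.real_smul, SchwartzMap.fourier_coe]
      rw [hgX, hω]
      -- the function on ℝ × ℝ
      set Ψ : ℝ × ℝ → ℂ := fun p =>
        Complex.exp ((-2 * π * (p.2 * ((1 / (2 * π)) * X)) : ℝ) * Complex.I) * K p with hΨdef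
      have hchar : Continuous fun p : ℝ × ℝ =>
          Complex.exp ((-2 * π * (p.2 * ((1 / (2 * π)) * X)) : ℝ) * Complex.I) :=
        Complex.continuous_exp.comp ((Complex.continuous_ofReal.comp
          (continuous_const.mul (continuous_snd.mul continuous_const))).mul continuous_const)
      have hΨint : Integrable Ψ (volume : Measure (ℝ × ℝ)) := by
        apply (K.integrable).bdd_mul (c := 1) hchar.aestronglyMeasurable
        refine Filter.Eventually.of_forall fun p => ?_
        rw [Complex.norm_exp]
        simp
      -- 𝓕 K' (m X) as an integral over ℝ × ℝ
      have step1 : 𝓕 (⇑K') (m X) = ∫ p : ℝ × ℝ, Ψ p := by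
        rw [Real.fourier_eq']
        rw [← (Complex.volume_preserving_equiv_real_prod.symm).integral_comp
          Complex.measurableEquivRealProd.symm.measurableEmbedding]
        refine integral_congr_ae (Filter.Eventually.of_forall fun p => ?_)
        dsimp only [hΨdef]
        rw [smul_eq_mul]
        have hre : (Complex.measurableEquivRealProd.symm p).re = p.1 := by
          simp [Complex.measurableEquivRealProd, Complex.equivRealProd]
        have him : (Complex.measurableEquivRealProd.symm p).im = p.2 := by
          simp [Complex.measurableEquivRealProd, Complex.equivRealProd]
        have hinner : (inner ℝ (Complex.measurableEquivRealProd.symm p) (m X) : ℝ)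
            = p.2 * ((1 / (2 * π)) * X) := by
          rw [Complex.inner, hm]
          simp only [Complex.real_smul]
          simp [Complex.mul_re, hre, him]
          ring
        rw [hinner, hK', hre, him, Prod.mk.eta]
      have hΨint' : Integrable Ψ ((volume : Measure ℝ).prod (volume : Measure ℝ)) := by
        rwa [← MeasureTheory.Measure.volume_eq_prod]
      have hswap : ∫ p : ℝ × ℝ, Ψ p = ∫ t : ℝ, ∫ s : ℝ, Ψ (s, t) := by
        calc ∫ p : ℝ × ℝ, Ψ p = ∫ s : ℝ, ∫ t : ℝ, Ψ (s, t) := by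
              rw [MeasureTheory.Measure.volume_eq_prod]
              exact MeasureTheory.integral_prod _ hΨint'
          _ = ∫ t : ℝ, ∫ s : ℝ, Ψ (s, t) := integral_integral_swap hΨint'
      have hpt : ∀ t s : ℝ, Ψ (s, t) = Complex.exp (Complex.I * (s * c - X) * t) *
          ρ (s - t * b / 2, s + t * b / 2) := by
        intro t s
        have h1 : Ψ (s, t) = Complex.exp ((-2 * π * (t * ((1 / (2 * π)) * X)) : ℝ) * Complex.I
            + (c * (s * t) : ℝ) * Complex.I) * ρ (s - b / 2 * t, s + b / 2 * t) := by
          simp only [hΨdef]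
          rw [hK, hG]
          dsimp only
          rw [Complex.real_smul, Complex.exp_add]
          ring
        rw [h1]
        have harg : ((-2 * π * (t * ((1 / (2 * π)) * X)) : ℝ) : ℂ) * Complex.I
            + ((c * (s * t) : ℝ) : ℂ) * Complex.I = Complex.I * (s * c - X) * t := by
          have hπC : (π : ℂ) ≠ 0 := by exact_mod_cast Real.pi_ne_zero
          push_cast
          field_simp
          ring
        rw [harg]
        have hprod : ((s - b / 2 * t : ℝ), (s + b / 2 * t : ℝ))
            = ((s - t * b / 2 : ℝ), (s + t * b / 2 : ℝ)) := by
          simp only [Prod.mk.injEq]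
          constructor <;> ring
        rw [hprod]
      rw [step1, hswap]
      congr 1
      refine integral_congr_ae (Filter.Eventually.of_forall fun t => ?_)
      refine integral_congr_ae (Filter.Eventually.of_forall fun s => ?_)
      exact hpt t s
end
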